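/- Suppose V is conditionally independent of (Y, U) given S, and fix an instantiation u of U with the property that P(v | s) > 0 is possible (i.e., all conditional probabilities well-defined on support of S). If for some class y_j ≠ y_i, Δ^{ij}_s(u) = P(y_i, u, s) − P(y_j, u, s) ≤ 0 for every s in the support of S, then for every instantiation v of V, P(y_i, u, v) ≤ P(y_j, u, v); hence the instance (u, v) is never classified to y_i under strict-argmax classification. Conversely, if Δ^{ij}_s(u) > 0 for every s in the support of S and every j ≠ i, then for every v with P(v | s) > 0 for at least one s in the support, P(y_i, u, v) > P(y_j, u, v) for all j ≠ i, and (u, v) is classified to y_i. -/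
import Mathlib


open Finset in
/-- with `V ⊥ (Y,U) | S` and `Δ^{ij}_s(u) = P(y_i,u,s) − P(y_j,u,s)`:
(a) if `Δ^{ij}_s(u) ≤ 0` for all `s` in the support of `S` and some `j ≠ i`,
then `P(y_i,u,v) ≤ P(y_j,u,v)` for every `v`, hence `(u,v)` is never classified
to `y_i` under strict-argmax classification;
(b) conversely, if `Δ^{ij}_s(u) > 0` for every `j ≠ i` and every `s` in the support,
then every `v` with `P(v|s) > 0` for some `s` in the support satisfies
`P(y_j,u,v) < P(y_i,u,v)` for all `j ≠ i`, i.e. `(u,v)` is classified to `y_i`. -/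
theorem stmt3 {k : ℕ} {U S V : Type} [Fintype U] [Fintype S] [Fintype V]
    (P : Fin k → U → S → V → ℝ)
    (hnonneg : ∀ y u s v, 0 ≤ P y u s v)
    (hsum : ∑ y, ∑ u, ∑ s, ∑ v, P y u s v = 1)
    -- conditional independence: P(v | y,u,s) = P(v | s) whenever P(y,u,s) > 0
    (hCI : ∀ y u s v, 0 < (∑ v', P y u s v') →
      P y u s v / (∑ v', P y u s v')
        = (∑ y', ∑ u', P y' u' s v) / (∑ y', ∑ u', ∑ v', P y' u' s v'))
    (i : Fin k) (u : U) :
    -- (a) non-positive Δ for some j ≠ i ⇒ u is negative for class y_i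
    (∀ j : Fin k, j ≠ i →
      (∀ s, 0 < (∑ y', ∑ u', ∑ v', P y' u' s v') →
          (∑ v', P i u s v') - (∑ v', P j u s v') ≤ 0) →
      ∀ v, (∑ s, P i u s v) ≤ (∑ s, P j u s v)
        ∧ ¬ (∀ j' : Fin k, j' ≠ i → (∑ s, P j' u s v) < (∑ s, P i u s v)))
    ∧
    -- (b) positive Δ for every j ≠ i ⇒ u is positive for class y_i
    ((∀ j : Fin k, j ≠ i →
        ∀ s, 0 < (∑ y', ∑ u', ∑ v', P y' u' s v') →
          0 < (∑ v', P i u s v') - (∑ v', P j u s v')) →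
      ∀ v, (∃ s, 0 < (∑ y', ∑ u', ∑ v', P y' u' s v')
              ∧ 0 < (∑ y', ∑ u', P y' u' s v) / (∑ y', ∑ u', ∑ v', P y' u' s v')) →
        ∀ j : Fin k, j ≠ i → (∑ s, P j u s v) < (∑ s, P i u s v)) := by
  -- factorization: P(y,u,s,v) = P(y,u,s) * f(s,v)
  have key : ∀ (y : Fin k) (s : S) (v : V),
      P y u s v = (∑ v', P y u s v') *
        ((∑ y', ∑ u', P y' u' s v) / (∑ y', ∑ u', ∑ v', P y' u' s v')) := by
    intro y s v
    rcases (Finset.sum_nonneg fun v' _ => hnonneg y u s v').lt_or_eq with hm | hm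
    · have h := hCI y u s v hm
      rw [div_eq_iff hm.ne'] at h
      rw [h]; ring
    · have hz := (Finset.sum_eq_zero_iff_of_nonneg
        (fun v' _ => hnonneg y u s v')).mp hm.symm
      rw [hz v (Finset.mem_univ v), ← hm, zero_mul]
  have fnonneg : ∀ (s : S) (v : V),
      (0:ℝ) ≤ (∑ y', ∑ u', P y' u' s v) / (∑ y', ∑ u', ∑ v', P y' u' s v') := by
    intro s v
    apply div_nonneg
    · exact Finset.sum_nonneg fun _ _ => Finset.sum_nonneg fun _ _ => hnonneg _ _ _ _
    · exact Finset.sum_nonneg fun _ _ => Finset.sum_nonneg fun _ _ =>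
        Finset.sum_nonneg fun _ _ => hnonneg _ _ _ _
  have tnonneg : ∀ s : S, (0:ℝ) ≤ (∑ y', ∑ u', ∑ v', P y' u' s v') :=
    fun s => Finset.sum_nonneg fun _ _ => Finset.sum_nonneg fun _ _ =>
      Finset.sum_nonneg fun _ _ => hnonneg _ _ _ _
  constructor
  · intro j hj hΔ v
    have hle : (∑ s, P i u s v) ≤ (∑ s, P j u s v) := by
      apply Finset.sum_le_sum
      intro s _
      rw [key i s v, key j s v]
      rcases (tnonneg s).lt_or_eq with ht | ht
      · have := hΔ s ht
        nlinarith [fnonneg s v]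
      · rw [← ht, div_zero, mul_zero, mul_zero]
    refine ⟨hle, fun h => ?_⟩
    exact absurd (h j hj) (not_lt.mpr hle)
  · intro hΔ v ⟨s₀, hs₀, hf₀⟩ j hj
    have : (0:ℝ) < (∑ s, P i u s v) - (∑ s, P j u s v) := by
      rw [← Finset.sum_sub_distrib]
      apply Finset.sum_pos'
      · intro s _
        rw [key i s v, key j s v]
        rcases (tnonneg s).lt_or_eq with ht | ht
        · have := hΔ j hj s ht
          nlinarith [fnonneg s v]
        · rw [← ht, div_zero, mul_zero, mul_zero, sub_self]
      · refine ⟨s₀, Finset.mem_univ s₀, ?_⟩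
        rw [key i s₀ v, key j s₀ v]
        have := hΔ j hj s₀ hs₀
        nlinarith
    linarith
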